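/- Let n ≥ 1 and let z₁, z₂ ∈ ℂ∖ℝ with z₁ ≠ z₂ and z₁ ≠ conj(z₂). Let π₁, π₂ be Hermitian projections of ℂⁿ. Let π̃₁ be the Hermitian projection of ℂⁿ whose range is the image of the range of π₁ under the invertible matrix g_{z₂,π₂}(z₁), and let π̃₂ be the Hermitian projection whose range is the image of the range of π₂ under g_{z₁,π₁}(z₂). Then for every λ ∈ ℂ∖{z₁, z₂}: g_{z₁,π̃₁}(λ)·g_{z₂,π₂}(λ) = g_{z₂,π̃₂}(λ)·g_{z₁,π₁}(λ). -/

import Mathlib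

open Matrix Complex Filter

noncomputable section

/-- A Hermitian projection of ℂⁿ: a matrix with π* = π and π² = π. -/
def IsHermitianProj {n : ℕ} (π : Matrix (Fin n) (Fin n) ℂ) : Prop :=
  πᴴ = π ∧ π * π = π

/-- The simple element g_{z,π}(λ) = I + ((z - conj z)/(λ - z))·(I - π). -/
def simpleElt {n : ℕ} (z : ℂ) (π : Matrix (Fin n) (Fin n) ℂ) (lam : ℂ) :
    Matrix (Fin n) (Fin n) ℂ :=
  1 + ((z - (starRingEnd ℂ) z) / (lam - z)) • (1 - π)

/-- The range of the linear map ℂⁿ → ℂⁿ defined by a matrix. -/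
def mrange {n m : ℕ} (A : Matrix (Fin n) (Fin m) ℂ) :
    Submodule ℂ (EuclideanSpace ℂ (Fin n)) :=
  LinearMap.range (Matrix.toEuclideanLin A)

/- ### Auxiliary lemmas -/

lemma aux_smul_cancel {A : Type*} [AddCommGroup A] [Module ℂ A] {c : ℂ} (hc : c ≠ 0)
    {x : A} (h : c • x = 0) : x = 0 := by
  have := congrArg (fun y => c⁻¹ • y) h
  simpa [smul_smul, inv_mul_cancel₀ hc] using this

lemma aux_smul_left_cancel {A : Type*} [AddCommGroup A] [Module ℂ A] {c : ℂ} (hc : c ≠ 0)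
    {x y : A} (h : c • x = c • y) : x = y := by
  have := congrArg (fun z => c⁻¹ • z) h
  simpa [smul_smul, inv_mul_cancel₀ hc] using this

lemma aux_quartic_expand {A : Type*} [Ring A] [Algebra ℂ A] (M₁ M₂ M₃ M₄ : A) (w : ℂ) :
    (w • 1 + M₁) * (w • 1 + M₂) * (w • 1 + M₃) * (w • 1 + M₄)
      = w ^ 4 • (1 : A) + w ^ 3 • (M₁ + M₂ + M₃ + M₄)
        + w ^ 2 • (M₁ * M₂ + M₁ * M₃ + M₁ * M₄ + M₂ * M₃ + M₂ * M₄ + M₃ * M₄)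
        + w • (M₁ * M₂ * M₃ + M₁ * M₂ * M₄ + M₁ * M₃ * M₄ + M₂ * M₃ * M₄)
        + M₁ * M₂ * M₃ * M₄ := by
  simp only [mul_add, add_mul, smul_mul_assoc, mul_smul_comm, smul_smul, one_mul, mul_one]
  module

/-- The core algebraic permutability statement. -/
lemma aux_core {A : Type*} [Ring A] [Algebra ℂ A]
    (z₁ z₂ w₃ w₄ : ℂ) {a b : ℂ} (p q p' q' : A)
    (ha : a = z₁ - w₃) (hb : b = z₂ - w₄)
    (d12 : z₁ ≠ z₂) (d13 : z₁ ≠ w₃) (d14 : z₁ ≠ w₄)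
    (d23 : z₂ ≠ w₃) (d24 : z₂ ≠ w₄) (d34 : w₃ ≠ w₄)
    (hp : p * p = p) (hq' : q' * q' = q')
    (h1 : p' * ((z₁ - z₂) • 1 + b • q) * (1 - p) = 0)
    (h2 : q * ((z₂ - w₃) • 1 - a • p) * (1 - q') = 0)
    (h3 : (1 - p') * ((w₃ - z₂) • 1 + b • q) * p = 0)
    (h4 : (1 - q) * ((w₄ - w₃) • 1 - a • p) * q' = 0)
    (lam : ℂ) (hl₁ : lam ≠ z₁) (hl₂ : lam ≠ z₂) :
    (1 + (a / (lam - z₁)) • p') * (1 + (b / (lam - z₂)) • q)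
      = (1 + (b / (lam - z₂)) • q') * (1 + (a / (lam - z₁)) • p) := by
  subst ha; subst hb
  have hd1 : lam - z₁ ≠ 0 := sub_ne_zero.mpr hl₁
  have hd2 : lam - z₂ ≠ 0 := sub_ne_zero.mpr hl₂
  set M₁ : A := (z₁ - w₃) • p' - z₁ • 1 with hM₁
  set M₂ : A := (z₂ - w₄) • q - z₂ • 1 with hM₂
  set M₃ : A := -((z₁ - w₃) • p) - w₃ • 1 with hM₃
  set M₄ : A := -((z₂ - w₄) • q') - w₄ • 1 with hM₄
  set C₃ : A := (M₁ + M₂ + M₃ + M₄) + (z₁ + z₂ + w₃ + w₄) • 1 with hC₃def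
  set C₂ : A := (M₁ * M₂ + M₁ * M₃ + M₁ * M₄ + M₂ * M₃ + M₂ * M₄ + M₃ * M₄)
      - (z₁ * z₂ + z₁ * w₃ + z₁ * w₄ + z₂ * w₃ + z₂ * w₄ + w₃ * w₄) • 1 with hC₂def
  set C₁ : A := (M₁ * M₂ * M₃ + M₁ * M₂ * M₄ + M₁ * M₃ * M₄ + M₂ * M₃ * M₄)
      + (z₁ * z₂ * w₃ + z₁ * z₂ * w₄ + z₁ * w₃ * w₄ + z₂ * w₃ * w₄) • 1 with hC₁def
  set C₀ : A := M₁ * M₂ * M₃ * M₄ - (z₁ * z₂ * w₃ * w₄) • 1 with hC₀def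
  have hexp : ∀ w : ℂ,
      ((w - z₁) • 1 + (z₁ - w₃) • p') * ((w - z₂) • 1 + (z₂ - w₄) • q) *
        ((w - w₃) • 1 - (z₁ - w₃) • p) * ((w - w₄) • 1 - (z₂ - w₄) • q')
        - ((w - z₁) * (w - z₂) * (w - w₃) * (w - w₄)) • 1
      = w ^ 3 • C₃ + w ^ 2 • C₂ + w • C₁ + C₀ := by
    intro w
    have e1 : (w - z₁) • (1 : A) + (z₁ - w₃) • p' = w • 1 + M₁ := by rw [hM₁]; module
    have e2 : (w - z₂) • (1 : A) + (z₂ - w₄) • q = w • 1 + M₂ := by rw [hM₂]; module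
    have e3 : (w - w₃) • (1 : A) - (z₁ - w₃) • p = w • 1 + M₃ := by rw [hM₃]; module
    have e4 : (w - w₄) • (1 : A) - (z₂ - w₄) • q' = w • 1 + M₄ := by rw [hM₄]; module
    rw [e1, e2, e3, e4, aux_quartic_expand, hC₃def, hC₂def, hC₁def, hC₀def]
    module
  have hval₁ : z₁ ^ 3 • C₃ + z₁ ^ 2 • C₂ + z₁ • C₁ + C₀ = 0 := by
    have hz : ((z₁ - z₁) • 1 + (z₁ - w₃) • p') * ((z₁ - z₂) • 1 + (z₂ - w₄) • q) *
        ((z₁ - w₃) • 1 - (z₁ - w₃) • p) * ((z₁ - w₄) • 1 - (z₂ - w₄) • q') = 0 := by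
      have f1 : (z₁ - z₁) • (1 : A) + (z₁ - w₃) • p' = (z₁ - w₃) • p' := by
        rw [sub_self, zero_smul, zero_add]
      have f3 : (z₁ - w₃) • (1 : A) - (z₁ - w₃) • p = (z₁ - w₃) • (1 - p) := by
        rw [smul_sub]
      rw [f1, f3]
      simp only [smul_mul_assoc, mul_smul_comm, smul_smul]
      rw [h1, zero_mul, smul_zero]
    linear_combination (norm := module) hz - hexp z₁
  have hval₂ : z₂ ^ 3 • C₃ + z₂ ^ 2 • C₂ + z₂ • C₁ + C₀ = 0 := by
    have hz : ((z₂ - z₁) • 1 + (z₁ - w₃) • p') * ((z₂ - z₂) • 1 + (z₂ - w₄) • q) *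
        ((z₂ - w₃) • 1 - (z₁ - w₃) • p) * ((z₂ - w₄) • 1 - (z₂ - w₄) • q') = 0 := by
      have f2 : (z₂ - z₂) • (1 : A) + (z₂ - w₄) • q = (z₂ - w₄) • q := by
        rw [sub_self, zero_smul, zero_add]
      have f4 : (z₂ - w₄) • (1 : A) - (z₂ - w₄) • q' = (z₂ - w₄) • (1 - q') := by
        rw [smul_sub]
      rw [f2, f4]
      simp only [smul_mul_assoc, mul_smul_comm, smul_smul]
      rw [mul_assoc _ q, mul_assoc _ (q * _), h2, mul_zero, smul_zero]
    linear_combination (norm := module) hz - hexp z₂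
  have hval₃ : w₃ ^ 3 • C₃ + w₃ ^ 2 • C₂ + w₃ • C₁ + C₀ = 0 := by
    have hz : ((w₃ - z₁) • 1 + (z₁ - w₃) • p') * ((w₃ - z₂) • 1 + (z₂ - w₄) • q) *
        ((w₃ - w₃) • 1 - (z₁ - w₃) • p) * ((w₃ - w₄) • 1 - (z₂ - w₄) • q') = 0 := by
      have f1 : (w₃ - z₁) • (1 : A) + (z₁ - w₃) • p' = (w₃ - z₁) • (1 - p') := by
        module
      have f3 : (w₃ - w₃) • (1 : A) - (z₁ - w₃) • p = (-(z₁ - w₃)) • p := by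
        module
      rw [f1, f3]
      simp only [smul_mul_assoc, mul_smul_comm, smul_smul]
      rw [h3, zero_mul, smul_zero]
    linear_combination (norm := module) hz - hexp w₃
  have hval₄ : w₄ ^ 3 • C₃ + w₄ ^ 2 • C₂ + w₄ • C₁ + C₀ = 0 := by
    have hz : ((w₄ - z₁) • 1 + (z₁ - w₃) • p') * ((w₄ - z₂) • 1 + (z₂ - w₄) • q) *
        ((w₄ - w₃) • 1 - (z₁ - w₃) • p) * ((w₄ - w₄) • 1 - (z₂ - w₄) • q') = 0 := by
      have f2 : (w₄ - z₂) • (1 : A) + (z₂ - w₄) • q = (w₄ - z₂) • (1 - q) := by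
        module
      have f4 : (w₄ - w₄) • (1 : A) - (z₂ - w₄) • q' = (-(z₂ - w₄)) • q' := by
        module
      rw [f2, f4]
      simp only [smul_mul_assoc, mul_smul_comm, smul_smul]
      rw [mul_assoc _ (1 - q), mul_assoc _ ((1 - q) * _), h4, mul_zero, smul_zero]
    linear_combination (norm := module) hz - hexp w₄
  have E12 : (z₁ ^ 2 + z₁ * z₂ + z₂ ^ 2) • C₃ + (z₁ + z₂) • C₂ + C₁ = 0 := by
    refine aux_smul_cancel (c := z₁ - z₂) (sub_ne_zero.mpr d12) ?_
    linear_combination (norm := module) hval₁ - hval₂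
  have E13 : (z₁ ^ 2 + z₁ * w₃ + w₃ ^ 2) • C₃ + (z₁ + w₃) • C₂ + C₁ = 0 := by
    refine aux_smul_cancel (c := z₁ - w₃) (sub_ne_zero.mpr d13) ?_
    linear_combination (norm := module) hval₁ - hval₃
  have E14 : (z₁ ^ 2 + z₁ * w₄ + w₄ ^ 2) • C₃ + (z₁ + w₄) • C₂ + C₁ = 0 := by
    refine aux_smul_cancel (c := z₁ - w₄) (sub_ne_zero.mpr d14) ?_
    linear_combination (norm := module) hval₁ - hval₄
  have F23 : (z₁ + z₂ + w₃) • C₃ + C₂ = 0 := by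
    refine aux_smul_cancel (c := z₂ - w₃) (sub_ne_zero.mpr d23) ?_
    linear_combination (norm := module) E12 - E13
  have F24 : (z₁ + z₂ + w₄) • C₃ + C₂ = 0 := by
    refine aux_smul_cancel (c := z₂ - w₄) (sub_ne_zero.mpr d24) ?_
    linear_combination (norm := module) E12 - E14
  have hC3 : C₃ = 0 := by
    refine aux_smul_cancel (c := w₃ - w₄) (sub_ne_zero.mpr d34) ?_
    linear_combination (norm := module) F23 - F24
  have hC2 : C₂ = 0 := by
    linear_combination (norm := module) F23 - (z₁ + z₂ + w₃) • hC3
  have hC1 : C₁ = 0 := by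
    linear_combination (norm := module) E12 - (z₁ ^ 2 + z₁ * z₂ + z₂ ^ 2) • hC3 - (z₁ + z₂) • hC2
  have hC0 : C₀ = 0 := by
    linear_combination (norm := module) hval₁ - z₁ ^ 3 • hC3 - z₁ ^ 2 • hC2 - z₁ • hC1
  have key : ∀ w : ℂ,
      ((w - z₁) • 1 + (z₁ - w₃) • p') * ((w - z₂) • 1 + (z₂ - w₄) • q) *
        ((w - w₃) • 1 - (z₁ - w₃) • p) * ((w - w₄) • 1 - (z₂ - w₄) • q')
      = ((w - z₁) * (w - z₂) * (w - w₃) * (w - w₄)) • 1 := by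
    intro w
    linear_combination (norm := module) hexp w + w ^ 3 • hC3 + w ^ 2 • hC2 + w • hC1 + hC0
  have hI : ∀ w : ℂ,
      (((w - w₃) • 1 - (z₁ - w₃) • p) * ((w - w₄) • 1 - (z₂ - w₄) • q')) *
        (((w - z₂) • 1 + (z₂ - w₄) • q') * ((w - z₁) • 1 + (z₁ - w₃) • p))
      = ((w - z₁) * (w - z₂) * (w - w₃) * (w - w₄)) • 1 := by
    intro w
    have e1 : ((w - w₄) • (1 : A) - (z₂ - w₄) • q') * ((w - z₂) • 1 + (z₂ - w₄) • q')
        = ((w - w₄) * (w - z₂)) • 1 := by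
      simp only [sub_mul, mul_add, add_mul, mul_sub, smul_mul_assoc, mul_smul_comm, smul_smul,
        one_mul, mul_one, hq']
      module
    have e2 : ((w - w₃) • (1 : A) - (z₁ - w₃) • p) * ((w - z₁) • 1 + (z₁ - w₃) • p)
        = ((w - w₃) * (w - z₁)) • 1 := by
      simp only [sub_mul, mul_add, add_mul, mul_sub, smul_mul_assoc, mul_smul_comm, smul_smul,
        one_mul, mul_one, hp]
      module
    rw [mul_assoc, ← mul_assoc ((w - w₄) • (1 : A) - (z₂ - w₄) • q'), e1, smul_mul_assoc,
      one_mul, mul_smul_comm, e2, smul_smul]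
    module
  set K₁ : A := (z₁ - w₃) • p' + (z₂ - w₄) • q - (z₁ - w₃) • p - (z₂ - w₄) • q' with hK₁def
  set K₀ : A := ((z₁ - w₃) * (z₂ - w₄)) • (p' * q) - ((z₁ - w₃) * (z₂ - w₄)) • (q' * p)
      - ((z₁ - w₃) * z₂) • p' - ((z₂ - w₄) * z₁) • q
      + ((z₁ - w₃) * z₂) • p + ((z₂ - w₄) * z₁) • q' with hK₀def
  have hW : ∀ w : ℂ,
      ((w - z₁) • 1 + (z₁ - w₃) • p') * ((w - z₂) • 1 + (z₂ - w₄) • q)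
        - ((w - z₂) • 1 + (z₂ - w₄) • q') * ((w - z₁) • 1 + (z₁ - w₃) • p)
      = w • K₁ + K₀ := by
    intro w
    rw [hK₁def, hK₀def]
    simp only [mul_add, add_mul, smul_mul_assoc, mul_smul_comm, smul_smul, one_mul, mul_one]
    module
  have hAll : ∀ w : ℂ,
      ((w - z₁) * (w - z₂) * (w - w₃) * (w - w₄)) • (w • K₁ + K₀) = 0 := by
    intro w
    have t1 : ((w - z₁) • 1 + (z₁ - w₃) • p') * ((w - z₂) • 1 + (z₂ - w₄) • q) *
        ((w - w₃) • 1 - (z₁ - w₃) • p) * ((w - w₄) • 1 - (z₂ - w₄) • q') *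
        (((w - z₂) • 1 + (z₂ - w₄) • q') * ((w - z₁) • 1 + (z₁ - w₃) • p))
        = ((w - z₁) * (w - z₂) * (w - w₃) * (w - w₄)) •
            (((w - z₂) • 1 + (z₂ - w₄) • q') * ((w - z₁) • 1 + (z₁ - w₃) • p)) := by
      rw [key w, smul_mul_assoc, one_mul]
    have t2 : ((w - z₁) • 1 + (z₁ - w₃) • p') * ((w - z₂) • 1 + (z₂ - w₄) • q) *
        ((w - w₃) • 1 - (z₁ - w₃) • p) * ((w - w₄) • 1 - (z₂ - w₄) • q') *
        (((w - z₂) • 1 + (z₂ - w₄) • q') * ((w - z₁) • 1 + (z₁ - w₃) • p))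
        = ((w - z₁) * (w - z₂) * (w - w₃) * (w - w₄)) •
            (((w - z₁) • 1 + (z₁ - w₃) • p') * ((w - z₂) • 1 + (z₂ - w₄) • q)) := by
      rw [mul_assoc (_ * _ * _), mul_assoc (_ * _),
        ← mul_assoc ((w - w₃) • (1 : A) - (z₁ - w₃) • p), hI w, mul_smul_comm, mul_one]
    have hdd := t2.symm.trans t1
    linear_combination (norm := module) hdd
      - ((w - z₁) * (w - z₂) * (w - w₃) * (w - w₄)) • hW w
  have hK₁ : K₁ = 0 := by
    linear_combination (norm := module) (-1/120 : ℂ) • hAll 0 + (1/24 : ℂ) • hAll 1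
      + (-1/12 : ℂ) • hAll 2 + (1/12 : ℂ) • hAll 3 + (-1/24 : ℂ) • hAll 4
      + (1/120 : ℂ) • hAll 5
  have hAll' : ∀ w : ℂ, ((w - z₁) * (w - z₂) * (w - w₃) * (w - w₄)) • K₀ = 0 := by
    intro w
    have h := hAll w
    rw [hK₁] at h
    simpa using h
  have hK₀ : K₀ = 0 := by
    linear_combination (norm := module) (1/24 : ℂ) • hAll' 0 + (-1/6 : ℂ) • hAll' 1
      + (1/4 : ℂ) • hAll' 2 + (-1/6 : ℂ) • hAll' 3 + (1/24 : ℂ) • hAll' 4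
  have hfin : ((lam - z₁) • 1 + (z₁ - w₃) • p') * ((lam - z₂) • 1 + (z₂ - w₄) • q)
      = ((lam - z₂) • 1 + (z₂ - w₄) • q') * ((lam - z₁) • 1 + (z₁ - w₃) • p) := by
    linear_combination (norm := module) hW lam + lam • hK₁ + hK₀
  have r1 : (lam - z₁) • ((1 : A) + ((z₁ - w₃) / (lam - z₁)) • p')
      = (lam - z₁) • 1 + (z₁ - w₃) • p' := by
    have hs : (lam - z₁) * ((z₁ - w₃) / (lam - z₁)) = z₁ - w₃ := by field_simp
    rw [smul_add, smul_smul, hs]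
  have r2 : (lam - z₂) • ((1 : A) + ((z₂ - w₄) / (lam - z₂)) • q)
      = (lam - z₂) • 1 + (z₂ - w₄) • q := by
    have hs : (lam - z₂) * ((z₂ - w₄) / (lam - z₂)) = z₂ - w₄ := by field_simp
    rw [smul_add, smul_smul, hs]
  have r3 : (lam - z₂) • ((1 : A) + ((z₂ - w₄) / (lam - z₂)) • q')
      = (lam - z₂) • 1 + (z₂ - w₄) • q' := by
    have hs : (lam - z₂) * ((z₂ - w₄) / (lam - z₂)) = z₂ - w₄ := by field_simp
    rw [smul_add, smul_smul, hs]
  have r4 : (lam - z₁) • ((1 : A) + ((z₁ - w₃) / (lam - z₁)) • p)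
      = (lam - z₁) • 1 + (z₁ - w₃) • p := by
    have hs : (lam - z₁) * ((z₁ - w₃) / (lam - z₁)) = z₁ - w₃ := by field_simp
    rw [smul_add, smul_smul, hs]
  refine aux_smul_left_cancel (c := (lam - z₁) * (lam - z₂)) (mul_ne_zero hd1 hd2) ?_
  calc ((lam - z₁) * (lam - z₂)) •
        ((1 + ((z₁ - w₃) / (lam - z₁)) • p') * (1 + ((z₂ - w₄) / (lam - z₂)) • q))
      = ((lam - z₁) • (1 + ((z₁ - w₃) / (lam - z₁)) • p')) *
          ((lam - z₂) • (1 + ((z₂ - w₄) / (lam - z₂)) • q)) := by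
        rw [smul_mul_smul_comm]
    _ = ((lam - z₁) • 1 + (z₁ - w₃) • p') * ((lam - z₂) • 1 + (z₂ - w₄) • q) := by
        rw [r1, r2]
    _ = ((lam - z₂) • 1 + (z₂ - w₄) • q') * ((lam - z₁) • 1 + (z₁ - w₃) • p) := hfin
    _ = ((lam - z₂) • (1 + ((z₂ - w₄) / (lam - z₂)) • q')) *
          ((lam - z₁) • (1 + ((z₁ - w₃) / (lam - z₁)) • p)) := by
        rw [r3, r4]
    _ = ((lam - z₂) * (lam - z₁)) •
          ((1 + ((z₂ - w₄) / (lam - z₂)) • q') * (1 + ((z₁ - w₃) / (lam - z₁)) • p)) := by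
        rw [smul_mul_smul_comm]
    _ = ((lam - z₁) * (lam - z₂)) •
          ((1 + ((z₂ - w₄) / (lam - z₂)) • q') * (1 + ((z₁ - w₃) / (lam - z₁)) • p)) := by
        rw [mul_comm (lam - z₂)]

lemma aux_tel_mul {n : ℕ} (A B : Matrix (Fin n) (Fin n) ℂ) :
    Matrix.toEuclideanLin (A * B) = (Matrix.toEuclideanLin A).comp (Matrix.toEuclideanLin B) := by
  ext v i
  simp [Matrix.toEuclideanLin, Matrix.mulVec_mulVec]

lemma aux_tel_one {n : ℕ} :
    Matrix.toEuclideanLin (1 : Matrix (Fin n) (Fin n) ℂ) = LinearMap.id := by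
  ext v i
  simp [Matrix.toEuclideanLin]

lemma aux_mrange_mul {n : ℕ} (A B : Matrix (Fin n) (Fin n) ℂ) :
    mrange (A * B) = (mrange B).map (Matrix.toEuclideanLin A) := by
  simp [mrange, aux_tel_mul, LinearMap.range_comp]

lemma aux_proj_ann {n : ℕ} {π X : Matrix (Fin n) (Fin n) ℂ} (hπ : π * π = π)
    (h : mrange X ≤ mrange π) : (1 - π) * X = 0 := by
  have h1 : π * X = X := by
    apply Matrix.toEuclideanLin.injective
    rw [aux_tel_mul]
    ext v
    obtain ⟨y, hy⟩ := h ⟨v, rfl⟩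
    simp only [LinearMap.comp_apply]
    rw [← hy, ← LinearMap.comp_apply, ← aux_tel_mul, hπ]
  rw [sub_mul, one_mul, h1, sub_self]

lemma aux_simpleElt_inv_mul {n : ℕ} {π : Matrix (Fin n) (Fin n) ℂ} (hπ : π * π = π)
    {z lam : ℂ} (h1 : lam ≠ z) (h2 : lam ≠ (starRingEnd ℂ) z) :
    simpleElt ((starRingEnd ℂ) z) π lam * simpleElt z π lam = 1 := by
  have hq : (1 - π) * (1 - π) = 1 - π := by
    simp only [sub_mul, mul_sub, one_mul, mul_one, hπ]
    abel
  unfold simpleElt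
  rw [Complex.conj_conj]
  have h1' : lam - z ≠ 0 := sub_ne_zero.mpr h1
  have h2' : lam - (starRingEnd ℂ) z ≠ 0 := sub_ne_zero.mpr h2
  set c := (z - (starRingEnd ℂ) z) / (lam - z)
  set c' := ((starRingEnd ℂ) z - z) / (lam - (starRingEnd ℂ) z)
  have hkey : c' + c + c' * c = 0 := by
    simp only [c, c']
    field_simp
    ring
  calc (1 + c' • (1 - π)) * (1 + c • (1 - π))
      = 1 + (c' + c + c' * c) • (1 - π) := by
        simp only [mul_add, add_mul, mul_one, one_mul, smul_mul_assoc, mul_smul_comm,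
          smul_smul, hq]
        module
    _ = 1 := by rw [hkey]; simp

lemma aux_simpleElt_conjT {n : ℕ} {π : Matrix (Fin n) (Fin n) ℂ} (hπ : πᴴ = π) (z lam : ℂ) :
    (simpleElt z π lam)ᴴ = simpleElt ((starRingEnd ℂ) z) π ((starRingEnd ℂ) lam) := by
  unfold simpleElt
  rw [conjTranspose_add, conjTranspose_smul, conjTranspose_sub, conjTranspose_one, hπ]
  have : star ((z - (starRingEnd ℂ) z) / (lam - z))
      = (((starRingEnd ℂ) z - (starRingEnd ℂ) ((starRingEnd ℂ) z)) /
        ((starRingEnd ℂ) lam - (starRingEnd ℂ) z)) := by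
    show (starRingEnd ℂ) _ = _
    rw [map_div₀, map_sub, map_sub, Complex.conj_conj]
  rw [this]

lemma aux_scaled {n : ℕ} (z μ : ℂ) (π : Matrix (Fin n) (Fin n) ℂ) (h : μ ≠ z) :
    (μ - z) • simpleElt z π μ = (μ - z) • 1 + (z - (starRingEnd ℂ) z) • (1 - π) := by
  unfold simpleElt
  have hs : (μ - z) * ((z - (starRingEnd ℂ) z) / (μ - z)) = z - (starRingEnd ℂ) z :=
    mul_div_cancel₀ _ (sub_ne_zero.mpr h)
  rw [smul_add, smul_smul, hs]

lemma aux_comp_idem {n : ℕ} {π : Matrix (Fin n) (Fin n) ℂ} (hπ : π * π = π) :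
    (1 - π) * (1 - π) = 1 - π := by
  simp only [sub_mul, mul_sub, one_mul, mul_one, hπ]
  abel

/-- Permutability of simple elements: with π̃₁ the Hermitian projection onto
g_{z₂,π₂}(z₁)(range π₁) and π̃₂ the Hermitian projection onto g_{z₁,π₁}(z₂)(range π₂),
we have g_{z₁,π̃₁} g_{z₂,π₂} = g_{z₂,π̃₂} g_{z₁,π₁}. -/
theorem statement0 {n : ℕ} (hn : 1 ≤ n) (z₁ z₂ : ℂ)
    (hz₁ : z₁.im ≠ 0) (hz₂ : z₂.im ≠ 0)
    (h12 : z₁ ≠ z₂) (h12' : z₁ ≠ (starRingEnd ℂ) z₂)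
    (π₁ π₂ πt₁ πt₂ : Matrix (Fin n) (Fin n) ℂ)
    (hπ₁ : IsHermitianProj π₁) (hπ₂ : IsHermitianProj π₂)
    (hπt₁ : IsHermitianProj πt₁) (hπt₂ : IsHermitianProj πt₂)
    (hr₁ : mrange πt₁ = (mrange π₁).map (Matrix.toEuclideanLin (simpleElt z₂ π₂ z₁)))
    (hr₂ : mrange πt₂ = (mrange π₂).map (Matrix.toEuclideanLin (simpleElt z₁ π₁ z₂)))
    (lam : ℂ) (hl₁ : lam ≠ z₁) (hl₂ : lam ≠ z₂) :
    simpleElt z₁ πt₁ lam * simpleElt z₂ π₂ lam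
      = simpleElt z₂ πt₂ lam * simpleElt z₁ π₁ lam := by
  have hc₁ : z₁ ≠ (starRingEnd ℂ) z₁ := fun h => hz₁ (Complex.conj_eq_iff_im.mp h.symm)
  have hc₂ : z₂ ≠ (starRingEnd ℂ) z₂ := fun h => hz₂ (Complex.conj_eq_iff_im.mp h.symm)
  have h23 : z₂ ≠ (starRingEnd ℂ) z₁ := by
    intro h
    apply h12'
    rw [h, Complex.conj_conj]
  have h34 : (starRingEnd ℂ) z₁ ≠ (starRingEnd ℂ) z₂ := by
    intro h
    exact h12 (by simpa using congrArg (starRingEnd ℂ) h)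
  -- inverses
  have hinv₂ : simpleElt ((starRingEnd ℂ) z₂) π₂ z₁ * simpleElt z₂ π₂ z₁ = 1 :=
    aux_simpleElt_inv_mul hπ₂.2 h12 h12'
  have hinv₁ : simpleElt ((starRingEnd ℂ) z₁) π₁ z₂ * simpleElt z₁ π₁ z₂ = 1 :=
    aux_simpleElt_inv_mul hπ₁.2 h12.symm h23
  -- range annihilation identities
  have hA1 : (1 - πt₁) * (simpleElt z₂ π₂ z₁ * π₁) = 0 := by
    refine aux_proj_ann hπt₁.2 (le_of_eq ?_)
    rw [aux_mrange_mul, hr₁]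
  have hB1 : (1 - π₁) * (simpleElt ((starRingEnd ℂ) z₂) π₂ z₁ * πt₁) = 0 := by
    refine aux_proj_ann hπ₁.2 (le_of_eq ?_)
    rw [aux_mrange_mul, hr₁, ← Submodule.map_comp, ← aux_tel_mul, hinv₂, aux_tel_one,
      Submodule.map_id]
  have hC2 : (1 - πt₂) * (simpleElt z₁ π₁ z₂ * π₂) = 0 := by
    refine aux_proj_ann hπt₂.2 (le_of_eq ?_)
    rw [aux_mrange_mul, hr₂]
  have hD2 : (1 - π₂) * (simpleElt ((starRingEnd ℂ) z₁) π₁ z₂ * πt₂) = 0 := by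
    refine aux_proj_ann hπ₂.2 (le_of_eq ?_)
    rw [aux_mrange_mul, hr₂, ← Submodule.map_comp, ← aux_tel_mul, hinv₁, aux_tel_one,
      Submodule.map_id]
  -- conjugate-transposed versions
  have hB1t : πt₁ * simpleElt z₂ π₂ ((starRingEnd ℂ) z₁) * (1 - π₁) = 0 := by
    have h := congrArg conjTranspose hB1
    rw [conjTranspose_mul, conjTranspose_mul, conjTranspose_zero] at h
    rw [aux_simpleElt_conjT hπ₂.1, Complex.conj_conj, conjTranspose_sub, conjTranspose_one,
      hπ₁.1, hπt₁.1] at h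
    exact h
  have hC2t : π₂ * simpleElt ((starRingEnd ℂ) z₁) π₁ ((starRingEnd ℂ) z₂) * (1 - πt₂) = 0 := by
    have h := congrArg conjTranspose hC2
    rw [conjTranspose_mul, conjTranspose_mul, conjTranspose_zero] at h
    rw [aux_simpleElt_conjT hπ₁.1, conjTranspose_sub, conjTranspose_one,
      hπ₂.1, hπt₂.1] at h
    exact h
  -- core hypotheses
  have ch1 : (1 - πt₁) * ((z₁ - z₂) • 1 + (z₂ - (starRingEnd ℂ) z₂) • (1 - π₂)) *
      (1 - (1 - π₁)) = 0 := by
    rw [sub_sub_cancel, ← aux_scaled z₂ z₁ π₂ h12, mul_smul_comm, smul_mul_assoc,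
      mul_assoc, hA1, smul_zero]
  have ch2 : (1 - π₂) * ((z₂ - (starRingEnd ℂ) z₁) • 1 - (z₁ - (starRingEnd ℂ) z₁) • (1 - π₁)) *
      (1 - (1 - πt₂)) = 0 := by
    rw [sub_sub_cancel]
    have s2 : (z₂ - (starRingEnd ℂ) z₁) • simpleElt ((starRingEnd ℂ) z₁) π₁ z₂
        = (z₂ - (starRingEnd ℂ) z₁) • 1 - (z₁ - (starRingEnd ℂ) z₁) • (1 - π₁) := by
      rw [aux_scaled _ _ _ h23, Complex.conj_conj]
      module
    rw [← s2, mul_smul_comm, smul_mul_assoc, mul_assoc, hD2, smul_zero]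
  have ch3 : (1 - (1 - πt₁)) * (((starRingEnd ℂ) z₁ - z₂) • 1 +
      (z₂ - (starRingEnd ℂ) z₂) • (1 - π₂)) * (1 - π₁) = 0 := by
    rw [sub_sub_cancel, ← aux_scaled z₂ ((starRingEnd ℂ) z₁) π₂ (Ne.symm h23),
      mul_smul_comm, smul_mul_assoc, hB1t, smul_zero]
  have ch4 : (1 - (1 - π₂)) * (((starRingEnd ℂ) z₂ - (starRingEnd ℂ) z₁) • 1 -
      (z₁ - (starRingEnd ℂ) z₁) • (1 - π₁)) * (1 - πt₂) = 0 := by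
    rw [sub_sub_cancel]
    have s4 : ((starRingEnd ℂ) z₂ - (starRingEnd ℂ) z₁) •
          simpleElt ((starRingEnd ℂ) z₁) π₁ ((starRingEnd ℂ) z₂)
        = ((starRingEnd ℂ) z₂ - (starRingEnd ℂ) z₁) • 1
          - (z₁ - (starRingEnd ℂ) z₁) • (1 - π₁) := by
      rw [aux_scaled _ _ _ (Ne.symm h34), Complex.conj_conj]
      module
    rw [← s4, mul_smul_comm, smul_mul_assoc, hC2t, smul_zero]
  have := aux_core (A := Matrix (Fin n) (Fin n) ℂ) z₁ z₂ ((starRingEnd ℂ) z₁)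
    ((starRingEnd ℂ) z₂) (1 - π₁) (1 - π₂) (1 - πt₁) (1 - πt₂) rfl rfl
    h12 hc₁ h12' h23 hc₂ h34 (aux_comp_idem hπ₁.2) (aux_comp_idem hπt₂.2)
    ch1 ch2 ch3 ch4 lam hl₁ hl₂
  simpa only [simpleElt] using this
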